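/- Let V be a finite-dimensional rational vector space of dimension n. The space 𝒦[Sym²Alt²V^∨] of quadrilinear forms R(x,y,z,w) on V that are antisymmetric in (x,y), antisymmetric in (z,w), symmetric under simultaneous swap (x,y)↔(z,w), and satisfy the first Bianchi identity R(x,y,z,w) + R(y,z,x,w) + R(z,x,y,w) = 0, has dimension n²(n²−1)/12. -/

import Mathlib

open Module

/-- The space of algebraic curvature tensors on `V`: quadrilinear forms antisymmetric in the
first pair and the second pair of arguments, symmetric under swapping the two pairs, and
satisfying the first Bianchi identity. -/
def curvatureTensors (V : Type*) [AddCommGroup V] [Module ℚ V] :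
    Submodule ℚ (MultilinearMap ℚ (fun _ : Fin 4 => V) ℚ) where
  carrier := {R | ∀ x y z w : V,
    R ![y, x, z, w] = -R ![x, y, z, w] ∧
    R ![x, y, w, z] = -R ![x, y, z, w] ∧
    R ![z, w, x, y] = R ![x, y, z, w] ∧
    R ![x, y, z, w] + R ![y, z, x, w] + R ![z, x, y, w] = 0}
  add_mem' := by
    intro a b ha hb x y z w
    obtain ⟨h1, h2, h3, h4⟩ := ha x y z w
    obtain ⟨g1, g2, g3, g4⟩ := hb x y z w
    refine ⟨?_, ?_, ?_, ?_⟩ <;> simp only [MultilinearMap.add_apply] <;> linarith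
  zero_mem' := by intro x y z w; simp
  smul_mem' := by
    intro c a ha x y z w
    obtain ⟨h1, h2, h3, h4⟩ := ha x y z w
    refine ⟨?_, ?_, ?_, ?_⟩ <;> simp only [MultilinearMap.smul_apply, smul_eq_mul]
    · linear_combination c * h1
    · linear_combination c * h2
    · linear_combination c * h3
    · linear_combination c * h4

namespace CT
variable {n : ℕ} {V : Type*} [AddCommGroup V] [Module ℚ V]

lemma mem_curvatureTensors_iff (R : MultilinearMap ℚ (fun _ : Fin 4 => V) ℚ) :
    R ∈ curvatureTensors V ↔ ∀ x y z w : V,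
    R ![y, x, z, w] = -R ![x, y, z, w] ∧
    R ![x, y, w, z] = -R ![x, y, z, w] ∧
    R ![z, w, x, y] = R ![x, y, z, w] ∧
    R ![x, y, z, w] + R ![y, z, x, w] + R ![z, x, y, w] = 0 := Iff.rfl

/-! ### Coefficient algebra -/

def eps (i s : Fin n) : ℚ := if i = s then 1 else 0
def Wd (i j s t : Fin n) : ℚ := eps i s * eps j t - eps j s * eps i t
def Sc (i j k l a b c d : Fin n) : ℚ := Wd i j a b * Wd k l c d + Wd k l a b * Wd i j c d
def Cf (i j k l a b c d : Fin n) : ℚ :=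
  Sc i j k l a b c d - (1/3) * (Sc i j k l a b c d + Sc i j k l b c a d + Sc i j k l c a b d)

lemma Cf_swap1 (i j k l a b c d : Fin n) : Cf i j k l b a c d = -Cf i j k l a b c d := by
  simp only [Cf, Sc, Wd]; ring
lemma Cf_swap2 (i j k l a b c d : Fin n) : Cf i j k l a b d c = -Cf i j k l a b c d := by
  simp only [Cf, Sc, Wd]; ring
lemma Cf_pair (i j k l a b c d : Fin n) : Cf i j k l c d a b = Cf i j k l a b c d := by
  simp only [Cf, Sc, Wd]; ring
lemma Cf_bianchi (i j k l a b c d : Fin n) :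
    Cf i j k l a b c d + Cf i j k l b c a d + Cf i j k l c a b d = 0 := by
  simp only [Cf, Sc, Wd]; ring

/-! ### Multilinear maps from coefficients -/

noncomputable def mono (b : Basis (Fin n) ℚ V) (f : Fin 4 → Fin n) : MultilinearMap ℚ (fun _ : Fin 4 => V) ℚ :=
  (MultilinearMap.mkPiAlgebra ℚ (Fin 4) ℚ).compLinearMap (fun i => b.coord (f i))

noncomputable def Tm (b : Basis (Fin n) ℚ V) (C : Fin n → Fin n → Fin n → Fin n → ℚ) :
    MultilinearMap ℚ (fun _ : Fin 4 => V) ℚ :=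
  ∑ f : Fin 4 → Fin n, C (f 0) (f 1) (f 2) (f 3) • mono b f

lemma mono_basis (b : Basis (Fin n) ℚ V) (f g : Fin 4 → Fin n) :
    mono b f (fun i => b (g i)) = if g = f then 1 else 0 := by
  simp only [mono, MultilinearMap.compLinearMap_apply, MultilinearMap.mkPiAlgebra_apply,
    Basis.coord_apply, Basis.repr_self]
  by_cases h : g = f
  · subst h; simp
  · rw [if_neg h]
    obtain ⟨i, hi⟩ : ∃ i, g i ≠ f i := by
      by_contra hc; push_neg at hc; exact h (funext hc)
    apply Finset.prod_eq_zero (Finset.mem_univ i)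
    simp [Finsupp.single_apply, hi]

lemma Tm_basis (b : Basis (Fin n) ℚ V) (C : Fin n → Fin n → Fin n → Fin n → ℚ)
    (g : Fin 4 → Fin n) :
    Tm b C (fun i => b (g i)) = C (g 0) (g 1) (g 2) (g 3) := by
  rw [Tm, MultilinearMap.sum_apply, Finset.sum_eq_single g]
  · simp [mono_basis]
  · intro f _ hf; simp [mono_basis, Ne.symm hf]
  · simp

/-- explicit permutations of `Fin 4` -/
def pswap1 : Fin 4 ≃ Fin 4 := ⟨![1,0,2,3], ![1,0,2,3], by decide, by decide⟩
def pswap2 : Fin 4 ≃ Fin 4 := ⟨![0,1,3,2], ![0,1,3,2], by decide, by decide⟩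
def ppair : Fin 4 ≃ Fin 4 := ⟨![2,3,0,1], ![2,3,0,1], by decide, by decide⟩
def pcyc : Fin 4 ≃ Fin 4 := ⟨![1,2,0,3], ![2,0,1,3], by decide, by decide⟩
def pcyc2 : Fin 4 ≃ Fin 4 := ⟨![2,0,1,3], ![1,2,0,3], by decide, by decide⟩

lemma Tm_mem (b : Basis (Fin n) ℚ V) (i j k l : Fin n) :
    Tm b (Cf i j k l) ∈ curvatureTensors V := by
  have h1 : (Tm b (Cf i j k l)).domDomCongr pswap1 = -(Tm b (Cf i j k l)) := by
    apply Basis.ext_multilinear (fun _ => b)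
    intro v
    have : ((Tm b (Cf i j k l)).domDomCongr pswap1) (fun m => b (v m))
        = Tm b (Cf i j k l) (fun m => b (v (pswap1 m))) := rfl
    rw [this, Tm_basis, MultilinearMap.neg_apply, Tm_basis]
    exact Cf_swap1 i j k l (v 0) (v 1) (v 2) (v 3)
  have h2 : (Tm b (Cf i j k l)).domDomCongr pswap2 = -(Tm b (Cf i j k l)) := by
    apply Basis.ext_multilinear (fun _ => b)
    intro v
    have : ((Tm b (Cf i j k l)).domDomCongr pswap2) (fun m => b (v m))
        = Tm b (Cf i j k l) (fun m => b (v (pswap2 m))) := rfl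
    rw [this, Tm_basis, MultilinearMap.neg_apply, Tm_basis]
    exact Cf_swap2 i j k l (v 0) (v 1) (v 2) (v 3)
  have h3 : (Tm b (Cf i j k l)).domDomCongr ppair = Tm b (Cf i j k l) := by
    apply Basis.ext_multilinear (fun _ => b)
    intro v
    have : ((Tm b (Cf i j k l)).domDomCongr ppair) (fun m => b (v m))
        = Tm b (Cf i j k l) (fun m => b (v (ppair m))) := rfl
    rw [this, Tm_basis, Tm_basis]
    exact Cf_pair i j k l (v 0) (v 1) (v 2) (v 3)
  have h4 : Tm b (Cf i j k l) + (Tm b (Cf i j k l)).domDomCongr pcyc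
      + (Tm b (Cf i j k l)).domDomCongr pcyc2 = 0 := by
    apply Basis.ext_multilinear (fun _ => b)
    intro v
    have e1 : ((Tm b (Cf i j k l)).domDomCongr pcyc) (fun m => b (v m))
        = Tm b (Cf i j k l) (fun m => b (v (pcyc m))) := rfl
    have e2 : ((Tm b (Cf i j k l)).domDomCongr pcyc2) (fun m => b (v m))
        = Tm b (Cf i j k l) (fun m => b (v (pcyc2 m))) := rfl
    simp only [MultilinearMap.add_apply, MultilinearMap.zero_apply, e1, e2, Tm_basis]
    exact Cf_bianchi i j k l (v 0) (v 1) (v 2) (v 3)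
  intro x y z w
  refine ⟨?_, ?_, ?_, ?_⟩
  · have := congrFun (congrArg (fun M => M.toFun) h1) ![x,y,z,w]
    have hv : (fun m => (![x,y,z,w] : Fin 4 → V) (pswap1 m)) = ![y,x,z,w] := by
      funext m; fin_cases m <;> rfl
    simpa [MultilinearMap.domDomCongr, hv] using this
  · have := congrFun (congrArg (fun M => M.toFun) h2) ![x,y,z,w]
    have hv : (fun m => (![x,y,z,w] : Fin 4 → V) (pswap2 m)) = ![x,y,w,z] := by
      funext m; fin_cases m <;> rfl
    simpa [MultilinearMap.domDomCongr, hv] using this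
  · have := congrFun (congrArg (fun M => M.toFun) h3) ![x,y,z,w]
    have hv : (fun m => (![x,y,z,w] : Fin 4 → V) (ppair m)) = ![z,w,x,y] := by
      funext m; fin_cases m <;> rfl
    simpa [MultilinearMap.domDomCongr, hv] using this
  · have := congrFun (congrArg (fun M => M.toFun) h4) ![x,y,z,w]
    have hv1 : (fun m => (![x,y,z,w] : Fin 4 → V) (pcyc m)) = ![y,z,x,w] := by
      funext m; fin_cases m <;> rfl
    have hv2 : (fun m => (![x,y,z,w] : Fin 4 → V) (pcyc2 m)) = ![z,x,y,w] := by
      funext m; fin_cases m <;> rfl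
    simpa [MultilinearMap.domDomCongr, hv1, hv2] using this

/-! ### Canonical index tuples and evaluation -/

def isF (i j k l : Fin n) : Prop := i < j ∧ k < l ∧ k ≤ j ∧ (i < k ∨ (i = k ∧ j ≤ l))
instance (i j k l : Fin n) : Decidable (isF i j k l) := by unfold isF; infer_instance

lemma Wlt {i j a b : Fin n} (hij : i < j) (hab : a < b) :
    Wd i j a b = if i = a ∧ j = b then 1 else 0 := by
  simp only [Wd, eps]
  split_ifs <;>
    first
    | (exfalso; simp only [Fin.ext_iff, Fin.lt_iff_val_lt_val, Fin.le_iff_val_le_val] at *; omega)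
    | norm_num

lemma Wge {i j a b : Fin n} (hij : i < j) (hab : b ≤ a) :
    Wd i j a b = -(if i = b ∧ j = a then 1 else 0) := by
  simp only [Wd, eps]
  split_ifs <;>
    first
    | (exfalso; simp only [Fin.ext_iff, Fin.lt_iff_val_lt_val, Fin.le_iff_val_le_val] at *; omega)
    | norm_num

lemma Sc1 {i j k l s t u v : Fin n} (hp : isF i j k l) (hq : isF s t u v) :
    Sc i j k l s t u v = (if s = i ∧ t = j ∧ u = k ∧ v = l then 1 else 0)
      + (if s = i ∧ t = j ∧ u = k ∧ v = l ∧ i = k ∧ j = l then 1 else 0) := by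
  obtain ⟨hp1, hp2, hp3, hp4⟩ := hp
  obtain ⟨hq1, hq2, hq3, hq4⟩ := hq
  rw [Sc, Wlt hp1 hq1, Wlt hp2 hq2, Wlt hp2 hq1, Wlt hp1 hq2]
  split_ifs <;>
    first
    | (exfalso; simp only [Fin.ext_iff, Fin.lt_iff_val_lt_val, Fin.le_iff_val_le_val] at *; omega)
    | norm_num

lemma Sc2 {i j k l s t u v : Fin n} (hp : isF i j k l) (hq : isF s t u v) :
    Sc i j k l t u s v = -(if s = i ∧ t = j ∧ u = k ∧ v = l ∧ i = k then 1 else 0)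
      - (if s = i ∧ t = l ∧ u = k ∧ v = j then 1 else 0) := by
  obtain ⟨hp1, hp2, hp3, hp4⟩ := hp
  obtain ⟨hq1, hq2, hq3, hq4⟩ := hq
  have hsv : s < v := by
    simp only [Fin.lt_iff_val_lt_val, Fin.le_iff_val_le_val, Fin.ext_iff] at *; omega
  rw [Sc, Wge hp1 hq3, Wlt hp2 hsv, Wge hp2 hq3, Wlt hp1 hsv]
  split_ifs <;>
    first
    | (exfalso; simp only [Fin.ext_iff, Fin.lt_iff_val_lt_val, Fin.le_iff_val_le_val] at *; omega)
    | norm_num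

set_option maxHeartbeats 1600000 in
lemma Sc3 {i j k l s t u v : Fin n} (hp : isF i j k l) (hq : isF s t u v) :
    Sc i j k l u s t v = -(if s = i ∧ t = j ∧ u = k ∧ v = l ∧ j = k then 1 else 0) := by
  obtain ⟨hp1, hp2, hp3, hp4⟩ := hp
  obtain ⟨hq1, hq2, hq3, hq4⟩ := hq
  have hsu : s ≤ u := by
    simp only [Fin.lt_iff_val_lt_val, Fin.le_iff_val_le_val, Fin.ext_iff] at *; omega
  have hW1 : Wd i j u s = -(if i = s ∧ j = u then 1 else 0) := Wge hp1 hsu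
  have hW2 : Wd k l u s = -(if k = s ∧ l = u then 1 else 0) := Wge hp2 hsu
  have hW3 : Wd k l t v = (if k = t ∧ l = v then 1 else 0) - (if k = v ∧ l = t then 1 else 0) := by
    simp only [Wd, eps]
    split_ifs <;>
      first
      | (exfalso; simp only [Fin.ext_iff, Fin.lt_iff_val_lt_val, Fin.le_iff_val_le_val] at *;
          omega)
      | norm_num
  have hW4 : Wd i j t v = (if i = t ∧ j = v then 1 else 0) - (if i = v ∧ j = t then 1 else 0) := by
    simp only [Wd, eps]
    split_ifs <;>
      first
      | (exfalso; simp only [Fin.ext_iff, Fin.lt_iff_val_lt_val, Fin.le_iff_val_le_val] at *;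
          omega)
      | norm_num
  rw [Sc, hW1, hW2, hW3, hW4]
  clear hW1 hW2 hW3 hW4
  split_ifs <;>
    first
    | (exfalso; simp only [Fin.ext_iff, Fin.lt_iff_val_lt_val, Fin.le_iff_val_le_val] at *; omega)
    | norm_num

/-- master evaluation of `Cf` at canonical tuples -/
lemma Cf_eval {i j k l s t u v : Fin n} (hp : isF i j k l) (hq : isF s t u v) :
    Cf i j k l s t u v =
      (2/3) * (if s = i ∧ t = j ∧ u = k ∧ v = l then 1 else 0)
      + (2/3) * (if s = i ∧ t = j ∧ u = k ∧ v = l ∧ i = k ∧ j = l then 1 else 0)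
      + (1/3) * (if s = i ∧ t = j ∧ u = k ∧ v = l ∧ i = k then 1 else 0)
      + (1/3) * (if s = i ∧ t = j ∧ u = k ∧ v = l ∧ j = k then 1 else 0)
      + (1/3) * (if s = i ∧ t = l ∧ u = k ∧ v = j then 1 else 0) := by
  rw [Cf, Sc1 hp hq, Sc2 hp hq, Sc3 hp hq]
  ring

lemma Cf_eval_D {i j k l s t u v : Fin n} (hp : isF i j k l) (hq : isF s t u v)
    (hd1 : i < k) (hd2 : k < j) (hd3 : j ≠ l) :
    Cf i j k l s t u v = (2/3) * (if s = i ∧ t = j ∧ u = k ∧ v = l then 1 else 0)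
      + (1/3) * (if s = i ∧ t = l ∧ u = k ∧ v = j then 1 else 0) := by
  obtain ⟨hp1, hp2, hp3, hp4⟩ := hp
  obtain ⟨hq1, hq2, hq3, hq4⟩ := hq
  rw [Cf_eval ⟨hp1, hp2, hp3, hp4⟩ ⟨hq1, hq2, hq3, hq4⟩]
  split_ifs <;>
    first
    | (exfalso; simp only [Fin.ext_iff, Fin.lt_iff_val_lt_val, Fin.le_iff_val_le_val, ne_eq] at *;
        omega)
    | norm_num

lemma Cf_eval_same {i j k l s t u v : Fin n} (hp : isF i j k l) (hq : isF s t u v)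
    (hik : i = k) (hjl : j = l) :
    Cf i j k l s t u v = 2 * (if s = i ∧ t = j ∧ u = k ∧ v = l then 1 else 0) := by
  obtain ⟨hp1, hp2, hp3, hp4⟩ := hp
  obtain ⟨hq1, hq2, hq3, hq4⟩ := hq
  rw [Cf_eval ⟨hp1, hp2, hp3, hp4⟩ ⟨hq1, hq2, hq3, hq4⟩]
  split_ifs <;>
    first
    | (exfalso; simp only [Fin.ext_iff, Fin.lt_iff_val_lt_val, Fin.le_iff_val_le_val, ne_eq] at *;
        omega)
    | norm_num

lemma Cf_eval_rest {i j k l s t u v : Fin n} (hp : isF i j k l) (hq : isF s t u v)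
    (hnd : ¬(i < k ∧ k < j ∧ j ≠ l)) (hns : ¬(i = k ∧ j = l)) :
    Cf i j k l s t u v = (if s = i ∧ t = j ∧ u = k ∧ v = l then 1 else 0) := by
  obtain ⟨hp1, hp2, hp3, hp4⟩ := hp
  obtain ⟨hq1, hq2, hq3, hq4⟩ := hq
  rw [Cf_eval ⟨hp1, hp2, hp3, hp4⟩ ⟨hq1, hq2, hq3, hq4⟩]
  split_ifs <;>
    first
    | (exfalso; simp only [Fin.ext_iff, Fin.lt_iff_val_lt_val, Fin.le_iff_val_le_val, ne_eq,
        not_and, not_lt] at *; omega)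
    | norm_num

/-! ### The component-vanishing lemma (injectivity) -/

lemma components_zero (c : Fin n → Fin n → Fin n → Fin n → ℚ)
    (h1 : ∀ i j k l, c j i k l = -c i j k l)
    (h2 : ∀ i j k l, c i j l k = -c i j k l)
    (h3 : ∀ i j k l, c k l i j = c i j k l)
    (h4 : ∀ i j k l, c i j k l + c j k i l + c k i j l = 0)
    (hz : ∀ i j k l, isF i j k l → c i j k l = 0) :
    ∀ i j k l, c i j k l = 0 := by
  have hA : ∀ i j k l : Fin n, i < j → k < l → (i < k ∨ (i = k ∧ j ≤ l)) → c i j k l = 0 := by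
    intro i j k l hij hkl hlex
    by_cases hkj : k ≤ j
    · exact hz _ _ _ _ ⟨hij, hkl, hkj, hlex⟩
    · push_neg at hkj
      have hik : i < k := lt_trans hij hkj
      have hb := h4 i j k l
      have e1 : c j k i l = c i l j k := h3 i l j k
      have e2 : c k i j l = -c i k j l := h1 i k j l
      have z1 : c i k j l = 0 :=
        hz _ _ _ _ ⟨hik, lt_trans hkj hkl, le_of_lt hkj, Or.inl hij⟩
      have z2 : c i l j k = 0 :=
        hz _ _ _ _ ⟨lt_trans hik hkl, hkj, le_of_lt (lt_trans hkj hkl), Or.inl hij⟩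
      linarith
  have hB : ∀ i j k l : Fin n, i < j → k < l → c i j k l = 0 := by
    intro i j k l hij hkl
    by_cases hlex : i < k ∨ (i = k ∧ j ≤ l)
    · exact hA i j k l hij hkl hlex
    · have hlex' : k < i ∨ (k = i ∧ l ≤ j) := by
        push_neg at hlex
        rcases lt_trichotomy i k with h | h | h
        · exact absurd h (not_lt.mpr hlex.1)
        · exact Or.inr ⟨h.symm, le_of_lt (hlex.2 h)⟩
        · exact Or.inl h
      rw [← h3 i j k l]
      exact hA k l i j hkl hij hlex'
  intro i j k l
  rcases lt_trichotomy i j with hij | hij | hij <;> rcases lt_trichotomy k l with hkl | hkl | hkl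
  · exact hB i j k l hij hkl
  · subst hkl; have := h2 i j k k; linarith
  · have := h2 i j k l; have := hB i j l k hij hkl; linarith
  · subst hij; have := h1 i i k l; linarith
  · subst hij; have := h1 i i k l; linarith
  · subst hij; have := h1 i i k l; linarith
  · have := h1 i j k l; have := hB j i k l hij hkl; linarith
  · subst hkl; have := h2 i j k k; linarith
  · have h' := h1 i j k l
    have h'' := h2 j i k l
    have := hB j i l k hij hkl
    linarith

/-! ### The evaluation isomorphism -/

abbrev Fq (n : ℕ) := {q : Fin n × Fin n × Fin n × Fin n // isF q.1 q.2.1 q.2.2.1 q.2.2.2}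

lemma tuple_eq (b : Basis (Fin n) ℚ V) (i j k l : Fin n) :
    (![b i, b j, b k, b l] : Fin 4 → V) = fun m => b (![i,j,k,l] m) := by
  funext m; fin_cases m <;> rfl

/-- evaluation at canonical basis tuples -/
noncomputable def rho (b : Basis (Fin n) ℚ V) : (curvatureTensors V) →ₗ[ℚ] (Fq n → ℚ) where
  toFun R q := R.1 ![b q.1.1, b q.1.2.1, b q.1.2.2.1, b q.1.2.2.2]
  map_add' R S := by funext q; simp
  map_smul' c R := by funext q; simp

noncomputable def KK (b : Basis (Fin n) ℚ V) (i j k l : Fin n) : curvatureTensors V :=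
  ⟨Tm b (Cf i j k l), Tm_mem b i j k l⟩

lemma rho_KK (b : Basis (Fin n) ℚ V) (i j k l : Fin n) (q : Fq n) :
    rho b (KK b i j k l) q = Cf i j k l q.1.1 q.1.2.1 q.1.2.2.1 q.1.2.2.2 := by
  show Tm b (Cf i j k l) ![b q.1.1, b q.1.2.1, b q.1.2.2.1, b q.1.2.2.2] = _
  rw [tuple_eq, Tm_basis]
  rfl

lemma rho_inj (b : Basis (Fin n) ℚ V) : Function.Injective (rho b) := by
  rw [injective_iff_map_eq_zero]
  intro R hR
  ext1
  apply Basis.ext_multilinear (fun _ => b)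
  intro v
  have hvt : (fun m => b (v m)) = ![b (v 0), b (v 1), b (v 2), b (v 3)] := by
    funext m; fin_cases m <;> rfl
  set c : Fin n → Fin n → Fin n → Fin n → ℚ :=
    fun i j k l => R.1 ![b i, b j, b k, b l] with hc
  have hmem := (mem_curvatureTensors_iff R.1).mp R.2
  have h1 : ∀ i j k l, c j i k l = -c i j k l := fun i j k l =>
    (hmem (b i) (b j) (b k) (b l)).1
  have h2 : ∀ i j k l, c i j l k = -c i j k l := fun i j k l =>
    (hmem (b i) (b j) (b k) (b l)).2.1
  have h3 : ∀ i j k l, c k l i j = c i j k l := fun i j k l =>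
    (hmem (b i) (b j) (b k) (b l)).2.2.1
  have h4 : ∀ i j k l, c i j k l + c j k i l + c k i j l = 0 := fun i j k l =>
    (hmem (b i) (b j) (b k) (b l)).2.2.2
  have hz : ∀ i j k l, isF i j k l → c i j k l = 0 := by
    intro i j k l hf
    have := congrFun hR ⟨(i, j, k, l), hf⟩
    exact this
  have := components_zero c h1 h2 h3 h4 hz (v 0) (v 1) (v 2) (v 3)
  rw [hvt]
  simpa using this

lemma rho_surj (b : Basis (Fin n) ℚ V) : Function.Surjective (rho b) := by
  have key : ∀ p : Fq n, ∃ G : curvatureTensors V,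
      ∀ q : Fq n, rho b G q = if q = p then 1 else 0 := by
    rintro ⟨⟨i, j, k, l⟩, hp⟩
    dsimp only at hp
    by_cases hd : i < k ∧ k < j ∧ j ≠ l
    · -- 4 distinct indices
      have hp' : isF i l k j := by
        obtain ⟨hp1, hp2, hp3, hp4⟩ := hp
        refine ⟨?_, ?_, ?_, ?_⟩ <;>
          simp only [Fin.ext_iff, Fin.lt_iff_val_lt_val, Fin.le_iff_val_le_val, ne_eq] at * <;>
          omega
      refine ⟨(2:ℚ) • KK b i j k l - KK b i l k j, ?_⟩
      rintro ⟨⟨s, t, u, v⟩, hq⟩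
      dsimp only at hq
      rw [map_sub, map_smul]
      have e1 := rho_KK b i j k l ⟨(s,t,u,v), hq⟩
      have e2 := rho_KK b i l k j ⟨(s,t,u,v), hq⟩
      dsimp only at e1 e2
      simp only [Pi.sub_apply, Pi.smul_apply, smul_eq_mul]
      rw [e1, e2]
      rw [Cf_eval_D hp hq hd.1 hd.2.1 hd.2.2]
      have hd' : i < k ∧ k < l ∧ l ≠ j := by
        obtain ⟨hp1, hp2, hp3, hp4⟩ := hp
        simp only [Fin.ext_iff, Fin.lt_iff_val_lt_val, Fin.le_iff_val_le_val, ne_eq] at *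
        omega
      rw [Cf_eval_D hp' hq hd'.1 hd'.2.1 hd'.2.2]
      have hrhs : (⟨(s,t,u,v), hq⟩ : Fq n) = ⟨(i,j,k,l), hp⟩ ↔ (s = i ∧ t = j ∧ u = k ∧ v = l) := by
        simp [Subtype.ext_iff, Prod.ext_iff, and_assoc]
      have hr : (if (⟨(s,t,u,v), hq⟩ : Fq n) = ⟨(i,j,k,l), hp⟩ then (1:ℚ) else 0)
          = (if s = i ∧ t = j ∧ u = k ∧ v = l then (1:ℚ) else 0) := by
        by_cases h : (⟨(s,t,u,v), hq⟩ : Fq n) = ⟨(i,j,k,l), hp⟩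
        · rw [if_pos h, if_pos (hrhs.mp h)]
        · rw [if_neg h, if_neg fun hc => h (hrhs.mpr hc)]
      rw [hr]
      split_ifs <;>
        first
        | (exfalso; simp only [Fin.ext_iff, Fin.lt_iff_val_lt_val, Fin.le_iff_val_le_val,
            ne_eq] at *; omega)
        | norm_num
    · by_cases hs : i = k ∧ j = l
      · refine ⟨(2:ℚ)⁻¹ • KK b i j k l, ?_⟩
        rintro ⟨⟨s, t, u, v⟩, hq⟩
        dsimp only at hq
        rw [map_smul]
        have e1 := rho_KK b i j k l ⟨(s,t,u,v), hq⟩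
        dsimp only at e1
        simp only [Pi.smul_apply, smul_eq_mul]
        rw [e1, Cf_eval_same hp hq hs.1 hs.2]
        have hrhs : (⟨(s,t,u,v), hq⟩ : Fq n) = ⟨(i,j,k,l), hp⟩ ↔ (s = i ∧ t = j ∧ u = k ∧ v = l) := by
          simp [Subtype.ext_iff, Prod.ext_iff, and_assoc]
        have hr : (if (⟨(s,t,u,v), hq⟩ : Fq n) = ⟨(i,j,k,l), hp⟩ then (1:ℚ) else 0)
            = (if s = i ∧ t = j ∧ u = k ∧ v = l then (1:ℚ) else 0) := by
          by_cases h : (⟨(s,t,u,v), hq⟩ : Fq n) = ⟨(i,j,k,l), hp⟩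
          · rw [if_pos h, if_pos (hrhs.mp h)]
          · rw [if_neg h, if_neg fun hc => h (hrhs.mpr hc)]
        rw [hr]
        split_ifs <;> norm_num
      · refine ⟨KK b i j k l, ?_⟩
        rintro ⟨⟨s, t, u, v⟩, hq⟩
        dsimp only at hq
        have e1 := rho_KK b i j k l ⟨(s,t,u,v), hq⟩
        dsimp only at e1
        rw [e1, Cf_eval_rest hp hq hd hs]
        have hrhs : (⟨(s,t,u,v), hq⟩ : Fq n) = ⟨(i,j,k,l), hp⟩ ↔ (s = i ∧ t = j ∧ u = k ∧ v = l) := by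
          simp [Subtype.ext_iff, Prod.ext_iff, and_assoc]
        have hr : (if (⟨(s,t,u,v), hq⟩ : Fq n) = ⟨(i,j,k,l), hp⟩ then (1:ℚ) else 0)
            = (if s = i ∧ t = j ∧ u = k ∧ v = l then (1:ℚ) else 0) := by
          by_cases h : (⟨(s,t,u,v), hq⟩ : Fq n) = ⟨(i,j,k,l), hp⟩
          · rw [if_pos h, if_pos (hrhs.mp h)]
          · rw [if_neg h, if_neg fun hc => h (hrhs.mpr hc)]
        rw [hr]
  choose G hG using key
  intro w
  refine ⟨∑ p : Fq n, w p • G p, ?_⟩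
  funext q
  rw [map_sum]
  simp only [map_smul, Finset.sum_apply, Pi.smul_apply, smul_eq_mul, hG]
  rw [Finset.sum_eq_single q]
  · simp
  · intro p _ hp; simp [Ne.symm hp]
  · simp

lemma finrank_eq_card (b : Basis (Fin n) ℚ V) :
    finrank ℚ (curvatureTensors V) = Fintype.card (Fq n) := by
  classical
  have e : (curvatureTensors V) ≃ₗ[ℚ] (Fq n → ℚ) :=
    LinearEquiv.ofBijective (rho b) ⟨rho_inj b, rho_surj b⟩
  rw [e.finrank_eq, finrank_fintype_fun_eq_card]

/-! ### Counting -/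

def isF0 (i j k l : Fin n) : Prop := i < j ∧ k < l ∧ (i < k ∨ (i = k ∧ j ≤ l))
instance (i j k l : Fin n) : Decidable (isF0 i j k l) := by unfold isF0; infer_instance
abbrev F0q (n : ℕ) := {q : Fin n × Fin n × Fin n × Fin n // isF0 q.1 q.2.1 q.2.2.1 q.2.2.2}
def isD (i j k l : Fin n) : Prop := i < j ∧ j < k ∧ k < l
instance (i j k l : Fin n) : Decidable (isD i j k l) := by unfold isD; infer_instance
abbrev Dq (n : ℕ) := {q : Fin n × Fin n × Fin n × Fin n // isD q.1 q.2.1 q.2.2.1 q.2.2.2}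

/-- `F0 = F ⊔ D` -/
lemma card_F0_split : Fintype.card (F0q n) = Fintype.card (Fq n) + Fintype.card (Dq n) := by
  classical
  have h1 : ∀ q : Fin n × Fin n × Fin n × Fin n,
      isF q.1 q.2.1 q.2.2.1 q.2.2.2 ↔ (isF0 q.1 q.2.1 q.2.2.1 q.2.2.2 ∧ q.2.2.1 ≤ q.2.1) := by
    rintro ⟨i, j, k, l⟩
    simp only [isF, isF0]
    constructor
    · rintro ⟨a, b, c, d⟩; exact ⟨⟨a, b, d⟩, c⟩
    · rintro ⟨⟨a, b, d⟩, c⟩; exact ⟨a, b, c, d⟩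
  have h2 : ∀ q : Fin n × Fin n × Fin n × Fin n,
      isD q.1 q.2.1 q.2.2.1 q.2.2.2 ↔ (isF0 q.1 q.2.1 q.2.2.1 q.2.2.2 ∧ ¬ q.2.2.1 ≤ q.2.1) := by
    rintro ⟨i, j, k, l⟩
    simp only [isD, isF0, not_le]
    constructor
    · rintro ⟨a, b, c⟩; exact ⟨⟨a, c, Or.inl (lt_trans a b)⟩, b⟩
    · rintro ⟨⟨a, c, _⟩, b⟩; exact ⟨a, b, c⟩
  simp only [Fintype.card_subtype]
  have e1 : (Finset.univ.filter fun q : Fin n × Fin n × Fin n × Fin n =>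
        isF q.1 q.2.1 q.2.2.1 q.2.2.2)
      = (Finset.univ.filter fun q : Fin n × Fin n × Fin n × Fin n =>
        isF0 q.1 q.2.1 q.2.2.1 q.2.2.2).filter (fun q => q.2.2.1 ≤ q.2.1) := by
    rw [Finset.filter_filter]
    apply Finset.filter_congr
    intro q _
    simpa using h1 q
  have e2 : (Finset.univ.filter fun q : Fin n × Fin n × Fin n × Fin n =>
        isD q.1 q.2.1 q.2.2.1 q.2.2.2)
      = (Finset.univ.filter fun q : Fin n × Fin n × Fin n × Fin n =>
        isF0 q.1 q.2.1 q.2.2.1 q.2.2.2).filter (fun q => ¬ q.2.2.1 ≤ q.2.1) := by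
    rw [Finset.filter_filter]
    apply Finset.filter_congr
    intro q _
    simpa using h2 q
  rw [e1, e2]
  exact (Finset.card_filter_add_card_filter_not
    (fun q : Fin n × Fin n × Fin n × Fin n => q.2.2.1 ≤ q.2.1)).symm

lemma gauss0 (c : ℕ) : 2 * (∑ y ∈ Finset.range c, y) = c * (c - 1) := by
  have g := Finset.sum_range_id_mul_two c
  linarith [g]

lemma gauss1 (c : ℕ) : 2 * ((∑ y ∈ Finset.range c, y) + c) = c * (c + 1) := by
  have g := gauss0 c
  cases c with
  | zero => simp
  | succ m =>
    simp only [Nat.succ_sub_one] at g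
    have hr : (m+1)*(m+1+1) = (m+1)*m + 2*(m+1) := by ring
    linarith [g, hr]

section CardLe
variable (α : Type*) [Fintype α] [LinearOrder α]

lemma two_mul_card_le :
    2 * Fintype.card {pq : α × α // pq.1 ≤ pq.2} = Fintype.card α * (Fintype.card α + 1) := by
  classical
  have iso : Fin (Fintype.card α) ≃o α := Fintype.orderIsoFinOfCardEq α rfl
  set c := Fintype.card α with hc
  have e1 : {pq : α × α // pq.1 ≤ pq.2} ≃ {pq : Fin c × Fin c // pq.1 ≤ pq.2} :=
    (Equiv.subtypeEquiv (Equiv.prodCongr iso.toEquiv.symm iso.toEquiv.symm)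
      (fun pq => by simp [iso.symm.le_iff_le]))
  have e2 : {pq : Fin c × Fin c // pq.1 ≤ pq.2} ≃ (Σ y : Fin c, Fin (y.1 + 1)) :=
    { toFun := fun x => ⟨x.1.2, ⟨x.1.1.1, by have := x.2; omega⟩⟩
      invFun := fun y => ⟨(⟨y.2.1, by have h1 := y.2.2; have h2 := y.1.2; omega⟩, y.1),
        Fin.mk_le_of_le_val (Nat.lt_succ_iff.mp y.2.2)⟩
      left_inv := fun x => rfl
      right_inv := fun y => rfl }
  rw [Fintype.card_congr (e1.trans e2), Fintype.card_sigma]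
  simp only [Fintype.card_fin]
  rw [Fin.sum_univ_eq_sum_range (fun y => y + 1) c]
  have : ∑ y ∈ Finset.range c, (y + 1) = (∑ y ∈ Finset.range c, y) + c := by
    rw [Finset.sum_add_distrib, Finset.sum_const, Finset.card_range, smul_eq_mul, mul_one]
  rw [this]
  exact gauss1 c

lemma two_mul_card_lt :
    2 * Fintype.card {pq : α × α // pq.1 < pq.2} = Fintype.card α * (Fintype.card α - 1) := by
  classical
  have iso : Fin (Fintype.card α) ≃o α := Fintype.orderIsoFinOfCardEq α rfl
  set c := Fintype.card α with hc
  have e1 : {pq : α × α // pq.1 < pq.2} ≃ {pq : Fin c × Fin c // pq.1 < pq.2} :=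
    (Equiv.subtypeEquiv (Equiv.prodCongr iso.toEquiv.symm iso.toEquiv.symm)
      (fun pq => by simp [iso.symm.lt_iff_lt]))
  have e2 : {pq : Fin c × Fin c // pq.1 < pq.2} ≃ (Σ y : Fin c, Fin y.1) :=
    { toFun := fun x => ⟨x.1.2, ⟨x.1.1.1, by have := x.2; omega⟩⟩
      invFun := fun y => ⟨(⟨y.2.1, by have h1 := y.2.2; have h2 := y.1.2; omega⟩, y.1),
        Fin.mk_lt_of_lt_val y.2.2⟩
      left_inv := fun x => rfl
      right_inv := fun y => rfl }
  rw [Fintype.card_congr (e1.trans e2), Fintype.card_sigma]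
  simp only [Fintype.card_fin]
  rw [Fin.sum_univ_eq_sum_range (fun y => y) c]
  exact gauss0 c
end CardLe

/-- pairs in lex order -/
abbrev Pl (n : ℕ) := {p : Lex (Fin n × Fin n) // (ofLex p).1 < (ofLex p).2}

noncomputable instance : Fintype (Lex (Fin n × Fin n)) := Fintype.ofEquiv _ toLex

lemma card_Pl : 2 * Fintype.card (Pl n) = n * (n - 1) := by
  classical
  have e : Pl n ≃ {p : Fin n × Fin n // p.1 < p.2} :=
    { toFun := fun x => ⟨ofLex x.1, x.2⟩
      invFun := fun x => ⟨toLex x.1, x.2⟩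
      left_inv := fun x => rfl
      right_inv := fun x => rfl }
  rw [Fintype.card_congr e]
  have := two_mul_card_lt (Fin n)
  simpa using this

lemma card_F0 : 2 * Fintype.card (F0q n) = Fintype.card (Pl n) * (Fintype.card (Pl n) + 1) := by
  classical
  have e : F0q n ≃ {PQ : Pl n × Pl n // PQ.1 ≤ PQ.2} :=
    { toFun := fun x => ⟨(⟨toLex (x.1.1, x.1.2.1), x.2.1⟩, ⟨toLex (x.1.2.2.1, x.1.2.2.2), x.2.2.1⟩),
        by
          have h := x.2.2.2
          exact Subtype.mk_le_mk.mpr (Prod.Lex.le_iff.mpr h)⟩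
      invFun := fun x =>
        ⟨((ofLex x.1.1.1).1, (ofLex x.1.1.1).2, (ofLex x.1.2.1).1, (ofLex x.1.2.1).2),
          ⟨x.1.1.2, x.1.2.2, by
            have h := x.2
            rw [Subtype.mk_le_mk] at h
            exact Prod.Lex.le_iff.mp h⟩⟩
      left_inv := fun x => rfl
      right_inv := fun x => rfl }
  rw [Fintype.card_congr e]
  exact two_mul_card_le (Pl n)

lemma card_D : Fintype.card (Dq n) = Nat.choose n 4 := by
  classical
  have e : Dq n ≃ {s : Finset (Fin n) // s.card = 4} := by
    refine
      { toFun := fun x => ⟨{x.1.1, x.1.2.1, x.1.2.2.1, x.1.2.2.2}, ?_⟩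
        invFun := fun s => ⟨(s.1.orderEmbOfFin s.2 0, s.1.orderEmbOfFin s.2 1,
          s.1.orderEmbOfFin s.2 2, s.1.orderEmbOfFin s.2 3),
          (s.1.orderEmbOfFin s.2).strictMono (by decide),
          (s.1.orderEmbOfFin s.2).strictMono (by decide),
          (s.1.orderEmbOfFin s.2).strictMono (by decide)⟩
        left_inv := ?_
        right_inv := ?_ }
    · -- card = 4
      obtain ⟨⟨i, j, k, l⟩, hd⟩ := x
      obtain ⟨h1, h2, h3⟩ := hd
      dsimp only at h1 h2 h3 ⊢
      simp only [Fin.lt_iff_val_lt_val] at h1 h2 h3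
      rw [Finset.card_insert_of_notMem (by simp [Fin.ext_iff]; omega),
        Finset.card_insert_of_notMem (by simp [Fin.ext_iff]; omega),
        Finset.card_insert_of_notMem (by simp [Fin.ext_iff]; omega), Finset.card_singleton]
    · -- left inverse
      rintro ⟨⟨i, j, k, l⟩, hd⟩
      obtain ⟨h1, h2, h3⟩ := hd
      dsimp only at h1 h2 h3
      apply Subtype.ext
      have key : ∀ h : ({i, j, k, l} : Finset (Fin n)).card = 4,
          ((({i, j, k, l} : Finset (Fin n)).orderEmbOfFin h 0,
            ({i, j, k, l} : Finset (Fin n)).orderEmbOfFin h 1,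
            ({i, j, k, l} : Finset (Fin n)).orderEmbOfFin h 2,
            ({i, j, k, l} : Finset (Fin n)).orderEmbOfFin h 3) :
            Fin n × Fin n × Fin n × Fin n) = (i, j, k, l) := by
        intro h
        have hmono : StrictMono (![i, j, k, l] : Fin 4 → Fin n) := by
          intro a b hab
          fin_cases a <;> fin_cases b <;>
            first
            | exact absurd hab (by decide)
            | exact h1
            | exact h2
            | exact h3
            | exact lt_trans h1 h2
            | exact lt_trans h2 h3
            | exact lt_trans h1 (lt_trans h2 h3)
        have hmem : ∀ x : Fin 4,
            (![i, j, k, l] : Fin 4 → Fin n) x ∈ ({i, j, k, l} : Finset (Fin n)) := by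
          intro x; fin_cases x <;> simp
        have heq := Finset.orderEmbOfFin_unique h hmem hmono
        simp only [Prod.mk.injEq]
        exact ⟨(congrFun heq 0).symm, (congrFun heq 1).symm,
          (congrFun heq 2).symm, (congrFun heq 3).symm⟩
      exact key _
    · -- right inverse
      rintro ⟨s, hs⟩
      apply Subtype.ext
      dsimp only
      have hrange := Finset.range_orderEmbOfFin s hs
      apply Finset.ext
      intro x
      simp only [Finset.mem_insert, Finset.mem_singleton]
      constructor
      · rintro (rfl | rfl | rfl | rfl) <;> exact Finset.orderEmbOfFin_mem s hs _
      · intro hx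
        have : x ∈ Set.range (s.orderEmbOfFin hs) := by rw [hrange]; exact hx
        obtain ⟨m, rfl⟩ := this
        fin_cases m <;> simp
  rw [Fintype.card_congr e, Fintype.card_finset_len, Fintype.card_fin]

lemma arith_key (n : ℕ) :
    3*(n*(n-1))*((n*(n-1))+2) = (n-3)*((n-2)*((n-1)*n)) + 2*(n^2*(n^2-1)) := by
  match n with
  | 0 => rfl
  | 1 => rfl
  | 2 => rfl
  | 3 => rfl
  | (m+4) =>
    have a1 : m+4-1 = m+3 := by omega
    have a2 : m+4-2 = m+2 := by omega
    have a3 : m+4-3 = m+1 := by omega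
    have a4 : (m+4)^2 - 1 = m*m+8*m+15 := by
      have h1 : (m+4)^2 = (m*m+8*m+15) + 1 := by ring
      rw [h1, Nat.add_sub_cancel]
    rw [a1, a2, a3, a4]
    ring

lemma card_Fq : Fintype.card (Fq n) = n^2*(n^2-1)/12 := by
  classical
  have hM := card_Pl (n := n)
  have hA := card_F0 (n := n)
  have hsplit := card_F0_split (n := n)
  have hD := card_D (n := n)
  set M := Fintype.card (Pl n) with hMdef
  set A := Fintype.card (F0q n) with hAdef
  set F := Fintype.card (Fq n) with hFdef
  set D := Fintype.card (Dq n) with hDdef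
  have hdesc : Nat.descFactorial n 4 = 24 * D := by
    rw [hD, Nat.descFactorial_eq_factorial_mul_choose]
    norm_num [Nat.factorial]
  have hdesc2 : Nat.descFactorial n 4 = (n-3)*((n-2)*((n-1)*(n*1))) := by
    simp [Nat.descFactorial_succ, Nat.descFactorial_zero]
  have h24 : 24 * F + (n-3)*((n-2)*((n-1)*n)) = 3*(n*(n-1))*((n*(n-1))+2) := by
    have e : 3*(2*M)*((2*M)+2) = 12*(M*(M+1)) := by ring
    rw [← hM, e]
    have hDd : (n-3)*((n-2)*((n-1)*n)) = 24 * D := by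
      rw [← hdesc, hdesc2]; ring_nf
    rw [hDd]
    have h2A : 12 * (2 * A) = 12 * (M*(M+1)) := by rw [hA]
    omega
  have hF24 : 24 * F = 2*(n^2*(n^2-1)) := by
    have := arith_key n
    omega
  have h12 : 12 * F = n^2*(n^2-1) := by omega
  generalize hX : n^2*(n^2-1) = X at h12 ⊢
  omega

end CT

/-- for an `n`-dimensional rational vector space `V`, the space of algebraic
curvature tensors on `V` has dimension `n²(n²−1)/12`. -/
theorem stmt_4 (V : Type*) [AddCommGroup V] [Module ℚ V] [FiniteDimensional ℚ V]
    (n : ℕ) (hn : finrank ℚ V = n) :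
    finrank ℚ (curvatureTensors V) = n ^ 2 * (n ^ 2 - 1) / 12 := by
  classical
  have b : Basis (Fin n) ℚ V := Module.finBasisOfFinrankEq ℚ V hn
  rw [CT.finrank_eq_card b, CT.card_Fq]
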